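/- Let Q be a nondegenerate quadratic form on ℝ^n, and let X be a C¹ vector field defined on a neighborhood of 0 in ℝ^n with X(0) = 0, whose derivative A = DX(0) at 0 satisfies: x ↦ DQ(x)[Ax] is negative for all x ≠ 0. Then there exists δ > 0 such that DQ(x)[X(x)] < 0 for every x with 0 < |x| < δ. -/

import Mathlib

open scoped Topology

noncomputable def bilinCLM (n : ℕ) (B : LinearMap.BilinForm ℝ (Fin n → ℝ)) :
    (Fin n → ℝ) →L[ℝ] (Fin n → ℝ) →L[ℝ] ℝ :=
  LinearMap.toContinuousLinearMap
    { toFun := fun x => LinearMap.toContinuousLinearMap (B x)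
      map_add' := fun x y => by ext v; simp
      map_smul' := fun c x => by ext v; simp }

@[simp] lemma bilinCLM_apply (n : ℕ) (B : LinearMap.BilinForm ℝ (Fin n → ℝ)) (x y : Fin n → ℝ) :
    bilinCLM n B x y = B x y := rfl

lemma quadratic_hasFDerivAt (n : ℕ) (Q : QuadraticForm ℝ (Fin n → ℝ)) (x : Fin n → ℝ) :
    HasFDerivAt (fun v => Q v) (bilinCLM n Q.polarBilin x) x := by
  set B := bilinCLM n Q.polarBilin with hB
  have h1 : HasFDerivAt (fun v => B v v)
      (B.precompR _ x (ContinuousLinearMap.id ℝ _) +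
        B.precompL _ (ContinuousLinearMap.id ℝ _) x) x :=
    B.hasFDerivAt_of_bilinear (hasFDerivAt_id x) (hasFDerivAt_id x)
  have h2 := h1.const_smul ((2:ℝ)⁻¹)
  have hfun : (fun v : Fin n → ℝ => Q v) = fun v => (2:ℝ)⁻¹ • (B v v) := by
    funext v
    simp only [hB, bilinCLM_apply, QuadraticMap.polarBilin_apply_apply, QuadraticMap.polar_self,
      smul_eq_mul]
    ring
  rw [hfun]
  refine h2.congr_fderiv ?_
  ext v
  simp only [ContinuousLinearMap.smul_apply, ContinuousLinearMap.add_apply,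
    ContinuousLinearMap.precompR_apply, ContinuousLinearMap.precompL_apply,
    ContinuousLinearMap.compL_apply, ContinuousLinearMap.comp_apply,
    ContinuousLinearMap.id_apply, hB, bilinCLM_apply,
    QuadraticMap.polarBilin_apply_apply, smul_eq_mul]
  rw [QuadraticMap.polar_comm]
  ring

set_option maxHeartbeats 1000000 in
/-- Condition 3) of an adapted pseudo-gradient is a pseudo-gradient condition:
if `Q` is a nondegenerate quadratic form on `ℝ^n` and `X` is a `C¹` vector field
near `0` with `X(0) = 0` whose linearization `A = DX(0)` satisfies
`DQ(x)[Ax] < 0` for all `x ≠ 0`, then `DQ(x)[X(x)] < 0` for all `x ≠ 0` close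
enough to `0`. -/
theorem pseudo_gradient_near_interior_critical_point (n : ℕ)
    (Q : QuadraticForm ℝ (Fin n → ℝ))
    (hQ : LinearMap.BilinForm.Nondegenerate Q.polarBilin)
    (X : (Fin n → ℝ) → (Fin n → ℝ))
    (hX : ContDiffAt ℝ 1 X 0) (hX0 : X 0 = 0)
    (hneg : ∀ x : Fin n → ℝ, x ≠ 0 →
      fderiv ℝ (fun v => Q v) x (fderiv ℝ X 0 x) < 0) :
    ∃ δ > 0, ∀ x : Fin n → ℝ, 0 < ‖x‖ → ‖x‖ < δ →
      fderiv ℝ (fun v => Q v) x (X x) < 0 := by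
  have hQd : ∀ x : Fin n → ℝ, fderiv ℝ (fun v => Q v) x = bilinCLM n Q.polarBilin x :=
    fun x => (quadratic_hasFDerivAt n Q x).fderiv
  set B := bilinCLM n Q.polarBilin with hB
  set A := fderiv ℝ X 0 with hA
  rcases Nat.eq_zero_or_pos n with hn | hn
  · refine ⟨1, one_pos, fun x hx _ => absurd hx ?_⟩
    subst hn
    simp [Subsingleton.elim x 0]
  haveI : Nonempty (Fin n) := ⟨⟨0, hn⟩⟩
  -- compactness on the unit sphere
  have hcont : Continuous fun u : Fin n → ℝ => B u (A u) :=
    B.isBoundedBilinearMap.continuous.comp (continuous_id.prodMk A.continuous)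
  obtain ⟨u0, hu0, hmax⟩ := (isCompact_sphere (0 : Fin n → ℝ) 1).exists_isMaxOn
    (NormedSpace.sphere_nonempty.mpr zero_le_one) hcont.continuousOn
  set c : ℝ := -(B u0 (A u0)) with hc
  have hu0n : ‖u0‖ = 1 := mem_sphere_zero_iff_norm.mp hu0
  have hc0 : 0 < c := by
    have hne : u0 ≠ 0 := by
      intro h; rw [h, norm_zero] at hu0n; exact zero_ne_one hu0n
    have := hneg u0 hne
    rw [hQd] at this
    simp only [hc]
    linarith
  have hscale : ∀ x : Fin n → ℝ, B x (A x) ≤ -(c * ‖x‖ ^ 2) := by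
    intro x
    rcases eq_or_ne x 0 with rfl | hx
    · simp
    have hnx : (0 : ℝ) < ‖x‖ := norm_pos_iff.mpr hx
    set u : Fin n → ℝ := ‖x‖⁻¹ • x with hu
    have hun : u ∈ Metric.sphere (0 : Fin n → ℝ) 1 := by
      rw [mem_sphere_zero_iff_norm, hu, norm_smul, norm_inv, norm_norm,
        inv_mul_cancel₀ hnx.ne']
    have hle : B u (A u) ≤ -c := by
      have h := hmax hun
      simp only [Set.mem_setOf_eq] at h
      simp only [hc]
      linarith
    have hxu : x = ‖x‖ • u := by
      rw [hu, smul_smul, mul_inv_cancel₀ hnx.ne', one_smul]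
    calc B x (A x) = ‖x‖ ^ 2 * B u (A u) := by
          conv_lhs => rw [hxu]
          rw [map_smul, map_smul, ContinuousLinearMap.smul_apply,
            ContinuousLinearMap.smul_apply]
          simp [smul_eq_mul]; ring
      _ ≤ ‖x‖ ^ 2 * (-c) := by
          apply mul_le_mul_of_nonneg_left hle (by positivity)
      _ = -(c * ‖x‖ ^ 2) := by ring
  -- little-o estimate
  have hdiff : HasFDerivAt X A 0 := (hX.differentiableAt one_ne_zero).hasFDerivAt
  have hlo : (fun x => X x - A x) =o[𝓝 (0 : Fin n → ℝ)] fun x => x := by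
    have := hasFDerivAt_iff_isLittleO_nhds_zero.mp hdiff
    simpa [hX0] using this
  set ε : ℝ := c / (2 * (‖B‖ + 1)) with hε
  have hBpos : (0 : ℝ) < ‖B‖ + 1 := by positivity
  have hε0 : 0 < ε := by positivity
  have hev : ∀ᶠ x in 𝓝 (0 : Fin n → ℝ), ‖X x - A x‖ ≤ ε * ‖x‖ := by
    have := hlo.def hε0
    filter_upwards [this] with x hx using hx
  rw [Metric.eventually_nhds_iff] at hev
  obtain ⟨δ, hδ0, hδ⟩ := hev
  refine ⟨δ, hδ0, fun x hx hxδ => ?_⟩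
  have hxd : dist x 0 < δ := by rwa [dist_zero_right]
  have h1 : ‖X x - A x‖ ≤ ε * ‖x‖ := hδ hxd
  have h2 : B x (X x) = B x (A x) + B x (X x - A x) := by
    rw [← map_add]; congr 1; abel
  have h3 : B x (X x - A x) ≤ (‖B‖ * ε) * ‖x‖ ^ 2 := by
    calc B x (X x - A x) ≤ ‖B x (X x - A x)‖ := le_abs_self _
      _ ≤ ‖B x‖ * ‖X x - A x‖ := (B x).le_opNorm _
      _ ≤ (‖B‖ * ‖x‖) * (ε * ‖x‖) := by
          apply mul_le_mul (B.le_opNorm x) h1 (norm_nonneg _)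
          positivity
      _ = (‖B‖ * ε) * ‖x‖ ^ 2 := by ring
  have hBe : ‖B‖ * ε ≤ c / 2 := by
    have h : ε * (‖B‖ + 1) = c / 2 := by
      rw [hε]; field_simp
    nlinarith [norm_nonneg B, hε0.le]
  rw [hQd]
  have hx2 : 0 < ‖x‖ ^ 2 := by positivity
  have h4 : B x (X x) ≤ -(c * ‖x‖ ^ 2) + (‖B‖ * ε) * ‖x‖ ^ 2 := by
    rw [h2]; exact add_le_add (hscale x) h3
  have h5 : (‖B‖ * ε) * ‖x‖ ^ 2 ≤ (c / 2) * ‖x‖ ^ 2 :=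
    mul_le_mul_of_nonneg_right hBe hx2.le
  have h6 : 0 < (c / 2) * ‖x‖ ^ 2 := mul_pos (half_pos hc0) hx2
  clear_value B A c ε
  linarith
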